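/- Let Ω ⊂ ℝⁿ be a bounded open set whose boundary is locally the graph of a Lipschitz function. Then there exists c > 0 such that for any two points x¹, x² in the same connected component Ω_j of Ω, the intrinsic distance satisfies dist_{Ω_j}(x¹, x²) ≤ c |x¹ − x²|, where dist_{Ω_j}(x¹, x²) is the infimum over polygonal paths in Ω_j joining x¹ to x² of the total length Σ_k |y^k − y^{k+1}|. -/

import Mathlib

open Metric

/-- `Ω ⊆ ℝ^{m+1}` has a boundary locally described by the graph of a Lipschitz function:
there are `ρ > 0`, finitely many open sets `U j`, linear isometries `T j` and Lipschitz
functions `φ j : ℝ^m → ℝ` such that every boundary point has a `ρ`-ball inside some `U j`,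
and `Ω ∩ U j = {x ∈ U j : φ j (first m coordinates of T j x) > last coordinate of T j x}`. -/
def HasLipschitzBoundary (m : ℕ) (Ω : Set (EuclideanSpace ℝ (Fin (m + 1)))) : Prop :=
  ∃ (ρ : ℝ), 0 < ρ ∧ ∃ (N : ℕ) (U : Fin N → Set (EuclideanSpace ℝ (Fin (m + 1))))
    (T : Fin N → (EuclideanSpace ℝ (Fin (m + 1)) ≃ₗᵢ[ℝ] EuclideanSpace ℝ (Fin (m + 1))))
    (φ : Fin N → EuclideanSpace ℝ (Fin m) → ℝ) (L : NNReal),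
    (∀ j, IsOpen (U j) ∧ LipschitzWith L (φ j)) ∧
    (∀ x ∈ frontier Ω, ∃ j, ball x ρ ⊆ U j) ∧
    (∀ j, Ω ∩ U j = {x ∈ U j |
      φ j (WithLp.toLp 2 (fun i : Fin m => (T j x) i.castSucc)) > (T j x) (Fin.last m)})


variable {m : ℕ}

/-- A polygonal chain from `x` to `y` whose segments all lie in `C`, of total length at most `L`. -/
def SegChain (C : Set (EuclideanSpace ℝ (Fin (m + 1))))
    (x y : EuclideanSpace ℝ (Fin (m + 1))) (L : ℝ) : Prop :=
  ∃ (M : ℕ) (p : ℕ → EuclideanSpace ℝ (Fin (m + 1))),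
    p 0 = x ∧ p (M + 1) = y ∧
    (∀ j ≤ M, ∀ t ∈ Set.Icc (0 : ℝ) 1, (1 - t) • p j + t • p (j + 1) ∈ C) ∧
    ∑ j ∈ Finset.range (M + 1), ‖p j - p (j + 1)‖ ≤ L

lemma SegChain.mono {C C' : Set (EuclideanSpace ℝ (Fin (m + 1)))} {x y L}
    (h : SegChain C x y L) (hCC : C ⊆ C') : SegChain C' x y L := by
  obtain ⟨M, p, h0, h1, hseg, hsum⟩ := h
  exact ⟨M, p, h0, h1, fun j hj t ht => hCC (hseg j hj t ht), hsum⟩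

lemma SegChain.of_le {C : Set (EuclideanSpace ℝ (Fin (m + 1)))} {x y L L'}
    (h : SegChain C x y L) (hL : L ≤ L') : SegChain C x y L' := by
  obtain ⟨M, p, h0, h1, hseg, hsum⟩ := h
  exact ⟨M, p, h0, h1, hseg, hsum.trans hL⟩

lemma SegChain.single {C : Set (EuclideanSpace ℝ (Fin (m + 1)))} {x y}
    (h : ∀ t ∈ Set.Icc (0 : ℝ) 1, (1 - t) • x + t • y ∈ C) :
    SegChain C x y ‖x - y‖ := by
  refine ⟨0, fun j => if j = 0 then x else y, by simp, by simp, ?_, by simp⟩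
  intro j hj t ht
  interval_cases j
  simpa using h t ht

lemma SegChain.mem_right {C : Set (EuclideanSpace ℝ (Fin (m + 1)))} {x y L}
    (h : SegChain C x y L) : y ∈ C := by
  obtain ⟨M, p, h0, h1, hseg, hsum⟩ := h
  have := hseg M le_rfl 1 ⟨zero_le_one, le_rfl⟩
  simpa [h1] using this

lemma SegChain.trans {C : Set (EuclideanSpace ℝ (Fin (m + 1)))} {x y z L₁ L₂}
    (h₁ : SegChain C x y L₁) (h₂ : SegChain C y z L₂) : SegChain C x z (L₁ + L₂) := by
  obtain ⟨M₁, p, hp0, hp1, hpseg, hpsum⟩ := h₁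
  obtain ⟨M₂, q, hq0, hq1, hqseg, hqsum⟩ := h₂
  refine ⟨M₁ + M₂ + 1, fun j => if j ≤ M₁ then p j else q (j - (M₁ + 1)), ?_, ?_, ?_, ?_⟩
  · simp [hp0]
  · have h2 : ¬ (M₁ + M₂ + 1 + 1 ≤ M₁) := by omega
    have h3 : M₁ + M₂ + 1 + 1 - (M₁ + 1) = M₂ + 1 := by omega
    simp [h2, h3, hq1]
  · intro j hj t ht
    by_cases hjM : j ≤ M₁
    · have hr1 : (if j + 1 ≤ M₁ then p (j + 1) else q (j + 1 - (M₁ + 1))) = p (j + 1) := by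
        by_cases h' : j + 1 ≤ M₁
        · simp [h']
        · have : j = M₁ := by omega
          subst this
          simp [h', hq0, hp1]
      simp only [hjM, if_true, hr1]
      exact hpseg j hjM t ht
    · have hj1 : ¬ (j + 1 ≤ M₁) := by omega
      have he : j + 1 - (M₁ + 1) = (j - (M₁ + 1)) + 1 := by omega
      simp only [hjM, hj1, if_false, he]
      exact hqseg (j - (M₁ + 1)) (by omega) t ht
  · have hsplit : M₁ + M₂ + 1 + 1 = (M₁ + 1) + (M₂ + 1) := by ring
    rw [hsplit, Finset.sum_range_add]
    have e1 : ∀ j ∈ Finset.range (M₁ + 1),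
        ‖(if j ≤ M₁ then p j else q (j - (M₁ + 1))) -
          (if j + 1 ≤ M₁ then p (j + 1) else q (j + 1 - (M₁ + 1)))‖ = ‖p j - p (j + 1)‖ := by
      intro j hj
      rw [Finset.mem_range] at hj
      have hjM : j ≤ M₁ := by omega
      have hr1 : (if j + 1 ≤ M₁ then p (j + 1) else q (j + 1 - (M₁ + 1))) = p (j + 1) := by
        by_cases h' : j + 1 ≤ M₁
        · simp [h']
        · have : j = M₁ := by omega
          subst this
          simp [h', hq0, hp1]
      rw [if_pos hjM, hr1]
    have e2 : ∀ j ∈ Finset.range (M₂ + 1),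
        ‖(if M₁ + 1 + j ≤ M₁ then p (M₁ + 1 + j) else q (M₁ + 1 + j - (M₁ + 1))) -
          (if M₁ + 1 + j + 1 ≤ M₁ then p (M₁ + 1 + j + 1) else q (M₁ + 1 + j + 1 - (M₁ + 1)))‖
          = ‖q j - q (j + 1)‖ := by
      intro j hj
      have h1 : ¬ (M₁ + 1 + j ≤ M₁) := by omega
      have h2 : ¬ (M₁ + 1 + j + 1 ≤ M₁) := by omega
      have h3 : M₁ + 1 + j - (M₁ + 1) = j := by omega
      have h4 : M₁ + 1 + j + 1 - (M₁ + 1) = j + 1 := by omega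
      simp [h1, h2, h3, h4]
    rw [Finset.sum_congr rfl e1, Finset.sum_congr rfl e2]
    exact add_le_add hpsum hqsum

lemma SegChain.comp {Ω : Set (EuclideanSpace ℝ (Fin (m + 1)))} {x y L}
    (h : SegChain Ω x y L) (hx : x ∈ Ω) :
    SegChain (connectedComponentIn Ω x) x y L := by
  obtain ⟨M, p, h0, h1, hseg, hsum⟩ := h
  have key : ∀ j ≤ M, p j ∈ connectedComponentIn Ω x →
      ∀ t ∈ Set.Icc (0 : ℝ) 1, (1 - t) • p j + t • p (j + 1) ∈ connectedComponentIn Ω x := by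
    intro j hj hpj t ht
    set f : ℝ → EuclideanSpace ℝ (Fin (m + 1)) :=
      fun s => (1 - s) • p j + s • p (j + 1) with hf
    have hfc : Continuous f := by fun_prop
    have hpre : IsPreconnected (f '' Set.Icc 0 1) :=
      (isPreconnected_Icc).image f hfc.continuousOn
    have hsub : f '' Set.Icc 0 1 ⊆ Ω := by
      rintro _ ⟨s, hs, rfl⟩
      exact hseg j hj s hs
    have hmem : p j ∈ f '' Set.Icc 0 1 :=
      ⟨0, ⟨le_refl _, zero_le_one⟩, by simp [hf]⟩
    have himg := hpre.subset_connectedComponentIn hmem hsub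
    have heq : connectedComponentIn Ω x = connectedComponentIn Ω (p j) :=
      connectedComponentIn_eq hpj
    rw [heq]
    exact himg ⟨t, ht, rfl⟩
  have hmem : ∀ j ≤ M + 1, p j ∈ connectedComponentIn Ω x := by
    intro j hj
    induction j with
    | zero => rw [h0]; exact mem_connectedComponentIn hx
    | succ k ih =>
      have hk : k ≤ M := by omega
      have := key k hk (ih (by omega)) 1 ⟨zero_le_one, le_rfl⟩
      simpa using this
  exact ⟨M, p, h0, h1, fun j hj => key j hj (hmem j (by omega)), hsum⟩

lemma SegChain.congr_comp {Ω : Set (EuclideanSpace ℝ (Fin (m + 1)))} {x a b L}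
    (h : SegChain (connectedComponentIn Ω a) a b L) (ha : a ∈ connectedComponentIn Ω x) :
    SegChain (connectedComponentIn Ω x) a b L := by
  rwa [connectedComponentIn_eq ha]


lemma coord_abs_le_norm {n : ℕ} (v : EuclideanSpace ℝ (Fin n)) (i : Fin n) :
    |v i| ≤ ‖v‖ := by
  rw [EuclideanSpace.norm_eq]
  have h1 : |v i| = Real.sqrt (‖v i‖ ^ 2) := by
    rw [Real.sqrt_sq_eq_abs, Real.norm_eq_abs, abs_abs]
  rw [h1]
  apply Real.sqrt_le_sqrt
  exact Finset.single_le_sum (fun j _ => sq_nonneg ‖v j‖) (Finset.mem_univ i)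

lemma proj_norm_le {m : ℕ} (v : EuclideanSpace ℝ (Fin (m + 1)))
    (w : EuclideanSpace ℝ (Fin m)) (hw : ∀ i, w i = v i.castSucc) : ‖w‖ ≤ ‖v‖ := by
  rw [EuclideanSpace.norm_eq v, EuclideanSpace.norm_eq w]
  apply Real.sqrt_le_sqrt
  rw [Fin.sum_univ_castSucc]
  have h : (0:ℝ) ≤ ‖v (Fin.last m)‖ ^ 2 := sq_nonneg _
  have he : ∑ i : Fin m, ‖w i‖ ^ 2 = ∑ i : Fin m, ‖v i.castSucc‖ ^ 2 := by
    simp [hw]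
  rw [he]
  linarith

set_option maxHeartbeats 2000000 in
lemma loc_lemma {m : ℕ} {Ω : Set (EuclideanSpace ℝ (Fin (m + 1)))}
    (hΩo : IsOpen Ω) (hΩlip : HasLipschitzBoundary m Ω) :
    ∃ c₀ : ℝ, 1 ≤ c₀ ∧ ∀ z ∈ closure Ω, ∃ ε > 0, ∀ a b, a ∈ Ω → b ∈ Ω →
      dist a z < 2 * ε → dist b z < 2 * ε →
      SegChain (connectedComponentIn Ω a) a b (c₀ * dist a b) := by
  classical
  obtain ⟨ρ, hρ, N, U, T, φ, L, hUφ, hfr, hΩU⟩ := hΩlip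
  have hL0 : (0:ℝ) ≤ L := L.coe_nonneg
  refine ⟨2 * L + 5, by linarith, ?_⟩
  intro z hz
  by_cases hzΩ : z ∈ Ω
  · obtain ⟨ε, hε, hball⟩ := Metric.isOpen_iff.mp hΩo z hzΩ
    refine ⟨ε / 4, by linarith, ?_⟩
    intro a b ha hb haz hbz
    have hseg : ∀ t ∈ Set.Icc (0:ℝ) 1, (1 - t) • a + t • b ∈ Ω := by
      intro t ht
      apply hball
      have hA : a ∈ ball z ε := mem_ball.mpr (by linarith)
      have hB : b ∈ ball z ε := mem_ball.mpr (by linarith)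
      exact (convex_ball z ε) hA hB (by linarith [ht.2]) ht.1 (by ring)
    have h1 : SegChain Ω a b ‖a - b‖ := SegChain.single hseg
    have h2 := h1.comp ha
    apply h2.of_le
    have hde : ‖a - b‖ = dist a b := (dist_eq_norm a b).symm
    rw [hde]
    nlinarith [dist_nonneg (x := a) (y := b)]
  · have hzfr : z ∈ frontier Ω := by
      rw [hΩo.frontier_eq]
      exact ⟨hz, hzΩ⟩
    obtain ⟨j, hUj⟩ := hfr z hzfr
    have hφL := (hUφ j).2
    set ε := ρ / (4 * L + 12) with hεdef
    have h4L : (0:ℝ) < 4 * L + 12 := by linarith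
    have hε : 0 < ε := div_pos hρ h4L
    have hρε : (4 * L + 12) * ε = ρ := by
      rw [hεdef]; field_simp
    refine ⟨ε, hε, ?_⟩
    intro a b ha hb haz hbz
    set d := dist a b with hd
    have hd0 : 0 ≤ d := dist_nonneg
    have hd4 : d < 4 * ε := by
      have := dist_triangle_right a b z
      simp only [← hd] at this
      linarith
    set s := ((L:ℝ) + 2) * d with hs
    have hs' : s = (L:ℝ) * d + 2 * d := by rw [hs]; ring
    have hs0 : 0 ≤ s := by nlinarith
    set e := (T j).symm (EuclideanSpace.single (Fin.last m) 1) with he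
    have hee : ‖e‖ = 1 := by
      rw [he, LinearIsometryEquiv.norm_map, EuclideanSpace.norm_single]
      exact norm_one
    set P : EuclideanSpace ℝ (Fin (m+1)) → EuclideanSpace ℝ (Fin m) :=
      fun w => WithLp.toLp 2 (fun i => T j w i.castSucc) with hP
    set lst : EuclideanSpace ℝ (Fin (m+1)) → ℝ := fun w => T j w (Fin.last m) with hlst
    have hmem : ∀ w, w ∈ U j → (w ∈ Ω ↔ φ j (P w) > lst w) := by
      intro w hw
      have hiff := Set.ext_iff.mp (hΩU j) w
      constructor
      · intro hwΩ
        exact (hiff.mp ⟨hwΩ, hw⟩).2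
      · intro hgt
        exact (hiff.mpr ⟨hw, hgt⟩).1
    have hin : ∀ w, dist w z < ρ → φ j (P w) > lst w → w ∈ Ω := by
      intro w h1 h2
      exact (hmem w (hUj (mem_ball.mpr h1))).mpr h2
    have h2ερ : 2 * ε < ρ := by nlinarith
    have haU : a ∈ U j := hUj (mem_ball.mpr (by linarith))
    have hbU : b ∈ U j := hUj (mem_ball.mpr (by linarith))
    have hfa : φ j (P a) > lst a := (hmem a haU).mp ha
    have hfb : φ j (P b) > lst b := (hmem b hbU).mp hb
    have hTe : T j e = EuclideanSpace.single (Fin.last m) 1 := (T j).apply_symm_apply _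
    have hPe : ∀ w (σ : ℝ), P (w - σ • e) = P w := by
      intro w σ
      ext i
      show T j (w - σ • e) i.castSucc = T j w i.castSucc
      rw [map_sub, map_smul, hTe]
      have h0 : EuclideanSpace.single (Fin.last m) (1:ℝ) i.castSucc = 0 := by
        rw [EuclideanSpace.single_apply, if_neg (Fin.castSucc_lt_last i).ne]
      simp [PiLp.sub_apply, PiLp.smul_apply, h0, (Fin.castSucc_lt_last i).ne]
    have hle : ∀ w (σ : ℝ), lst (w - σ • e) = lst w - σ := by
      intro w σ
      show T j (w - σ • e) (Fin.last m) = T j w (Fin.last m) - σ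
      rw [map_sub, map_smul, hTe]
      have h0 : EuclideanSpace.single (Fin.last m) (1:ℝ) (Fin.last m) = 1 := by
        rw [EuclideanSpace.single_apply, if_pos rfl]
      simp [PiLp.sub_apply, PiLp.smul_apply, h0]
    have hPdiff : ∀ u w, ‖P u - P w‖ ≤ ‖u - w‖ := by
      intro u w
      have h1 : ∀ i, (P u - P w) i = (T j (u - w)) i.castSucc := by
        intro i
        rw [map_sub]
        simp [hP, PiLp.sub_apply]
      calc ‖P u - P w‖ ≤ ‖T j (u - w)‖ := proj_norm_le _ _ h1
      _ = ‖u - w‖ := (T j).norm_map _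
    have hφd : ∀ u w, φ j (P w) - L * ‖u - w‖ ≤ φ j (P u) := by
      intro u w
      have h1 := hφL.dist_le_mul (P u) (P w)
      rw [Real.dist_eq, dist_eq_norm] at h1
      have h2 := (abs_le.mp (h1.trans (mul_le_mul_of_nonneg_left (hPdiff u w) hL0))).1
      linarith
    have hlstd : ∀ u w, |lst u - lst w| ≤ ‖u - w‖ := by
      intro u w
      have h1 : lst u - lst w = (T j (u - w)) (Fin.last m) := by
        rw [map_sub]
        simp [hlst, PiLp.sub_apply]
      rw [h1, ← (T j).norm_map (u - w)]
      exact coord_abs_le_norm _ _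
    have hdist : ∀ w (σ : ℝ), 0 ≤ σ → dist (w - σ • e) z ≤ dist w z + σ := by
      intro w σ hσ
      rw [dist_eq_norm, dist_eq_norm]
      have h1 : w - σ • e - z = (w - z) + (-(σ • e)) := by abel
      rw [h1]
      calc ‖(w - z) + (-(σ • e))‖ ≤ ‖w - z‖ + ‖-(σ • e)‖ := norm_add_le _ _
      _ = ‖w - z‖ + σ := by
          rw [norm_neg, norm_smul, hee, Real.norm_eq_abs, abs_of_nonneg hσ, mul_one]
    have hρb : ∀ w (σ : ℝ), 0 ≤ σ → σ ≤ s → dist w z < 2 * ε → dist (w - σ • e) z < ρ := by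
      intro w σ h0 h1 h2
      have h3 := hdist w σ h0
      have h4 : s < ((L:ℝ) + 2) * (4 * ε) := by
        rw [hs]
        apply mul_lt_mul_of_pos_left hd4 (by linarith)
      nlinarith
    -- segment 1 : from a to a - s • e
    have hseg1 : ∀ t ∈ Set.Icc (0:ℝ) 1, (1 - t) • a + t • (a - s • e) ∈ Ω := by
      intro t ht
      have hw : (1 - t) • a + t • (a - s • e) = a - (t * s) • e := by
        rw [smul_sub, smul_smul]
        module
      rw [hw]
      have hts0 : 0 ≤ t * s := mul_nonneg ht.1 hs0
      apply hin
      · exact hρb a (t * s) hts0 (by nlinarith [ht.2]) haz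
      · rw [hPe, hle]
        linarith [hfa]
    -- segment 3 : from b - s • e to b
    have hseg3 : ∀ t ∈ Set.Icc (0:ℝ) 1, (1 - t) • (b - s • e) + t • b ∈ Ω := by
      intro t ht
      have hw : (1 - t) • (b - s • e) + t • b = b - ((1 - t) * s) • e := by
        rw [smul_sub, smul_smul]
        module
      rw [hw]
      have hts0 : 0 ≤ (1 - t) * s := mul_nonneg (by linarith [ht.2]) hs0
      apply hin
      · exact hρb b ((1 - t) * s) hts0 (by nlinarith [ht.1]) hbz
      · rw [hPe, hle]
        linarith [hfb]
    -- segment 2 : from a - s • e to b - s • e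
    have hseg2 : ∀ t ∈ Set.Icc (0:ℝ) 1, (1 - t) • (a - s • e) + t • (b - s • e) ∈ Ω := by
      intro t ht
      obtain ⟨u, hu⟩ : ∃ u, u = (1 - t) • a + t • b := ⟨_, rfl⟩
      have hw : (1 - t) • (a - s • e) + t • (b - s • e) = u - s • e := by
        rw [hu, smul_sub, smul_sub]
        module
      rw [hw]
      have hua : ‖u - a‖ ≤ d := by
        have h1 : u - a = t • (b - a) := by rw [hu]; module
        rw [h1, norm_smul, Real.norm_eq_abs, abs_of_nonneg ht.1]
        have h2 : ‖b - a‖ = d := by rw [hd, dist_eq_norm']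
        rw [h2]
        nlinarith [ht.2, hd0]
      have huz : dist u z < 2 * ε := by
        rw [dist_eq_norm]
        have h1 : u - z = (1 - t) • (a - z) + t • (b - z) := by rw [hu]; module
        rw [h1]
        have h2 : ‖(1 - t) • (a - z) + t • (b - z)‖ ≤ (1 - t) * ‖a - z‖ + t * ‖b - z‖ := by
          calc ‖(1 - t) • (a - z) + t • (b - z)‖ ≤ ‖(1 - t) • (a - z)‖ + ‖t • (b - z)‖ :=
              norm_add_le _ _
          _ = (1 - t) * ‖a - z‖ + t * ‖b - z‖ := by
              rw [norm_smul, norm_smul, Real.norm_eq_abs, Real.norm_eq_abs,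
                abs_of_nonneg (by linarith [ht.2] : (0:ℝ) ≤ 1 - t), abs_of_nonneg ht.1]
        have haz' : ‖a - z‖ < 2 * ε := by rw [← dist_eq_norm]; exact haz
        have hbz' : ‖b - z‖ < 2 * ε := by rw [← dist_eq_norm]; exact hbz
        rcases le_total ‖a - z‖ ‖b - z‖ with hc | hc
        · nlinarith [ht.1, ht.2]
        · nlinarith [ht.1, ht.2]
      apply hin
      · exact hρb u s hs0 le_rfl huz
      · rw [hPe, hle]
        have h1 := hφd u a
        have h2 := (abs_le.mp (hlstd u a)).1
        have h3 := (abs_le.mp (hlstd u a)).2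
        have hLd : (L:ℝ) * ‖u - a‖ ≤ (L:ℝ) * d := mul_le_mul_of_nonneg_left hua hL0
        linarith [hfa]
    have hc1 : SegChain Ω a (a - s • e) ‖a - (a - s • e)‖ := SegChain.single hseg1
    have hc2 : SegChain Ω (a - s • e) (b - s • e) ‖(a - s • e) - (b - s • e)‖ :=
      SegChain.single hseg2
    have hc3 : SegChain Ω (b - s • e) b ‖(b - s • e) - b‖ := SegChain.single hseg3
    have hn1 : ‖a - (a - s • e)‖ = s := by
      have h1 : a - (a - s • e) = s • e := by abel
      rw [h1, norm_smul, hee, Real.norm_eq_abs, abs_of_nonneg hs0, mul_one]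
    have hn2 : ‖(a - s • e) - (b - s • e)‖ = d := by
      have h1 : (a - s • e) - (b - s • e) = a - b := by abel
      rw [h1, hd, dist_eq_norm]
    have hn3 : ‖(b - s • e) - b‖ = s := by
      have h1 : (b - s • e) - b = -(s • e) := by abel
      rw [h1, norm_neg, norm_smul, hee, Real.norm_eq_abs, abs_of_nonneg hs0, mul_one]
    have hchain : SegChain Ω a b (s + d + s) := by
      have h1 := (hc1.trans hc2).trans hc3
      rwa [hn1, hn2, hn3] at h1
    apply (hchain.comp ha).of_le
    have hexp : (2 * (L:ℝ) + 5) * d = 2 * ((L:ℝ) * d) + 5 * d := by ring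
    linarith [hs']

set_option maxHeartbeats 1000000 in
/-- If `∂Ω` is locally the graph of a Lipschitz function and `Ω` is bounded, then the
intrinsic (polygonal-path) distance inside each connected component of `Ω` is dominated by
a fixed multiple of the Euclidean distance. -/
theorem stmt8 (m : ℕ) (Ω : Set (EuclideanSpace ℝ (Fin (m + 1))))
    (hΩo : IsOpen Ω) (hΩb : Bornology.IsBounded Ω) (hΩne : Ω.Nonempty)
    (hΩlip : HasLipschitzBoundary m Ω) :
    ∃ c > 0, ∀ x y : EuclideanSpace ℝ (Fin (m + 1)), x ∈ Ω →
      y ∈ connectedComponentIn Ω x →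
      sInf {ℓ : ℝ | ∃ (M : ℕ) (p : ℕ → EuclideanSpace ℝ (Fin (m + 1))),
          p 0 = x ∧ p (M + 1) = y ∧
          (∀ j ≤ M, ∀ t ∈ Set.Icc (0 : ℝ) 1,
            (1 - t) • p j + t • p (j + 1) ∈ connectedComponentIn Ω x) ∧
          ℓ = ∑ j ∈ Finset.range (M + 1), ‖p j - p (j + 1)‖} ≤ c * ‖x - y‖ := by
  classical
  obtain ⟨c₀, hc₀, hloc⟩ := loc_lemma hΩo hΩlip
  have hc₀0 : (0:ℝ) < c₀ := lt_of_lt_of_le one_pos hc₀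
  choose! ε hε hQ using hloc
  have hK : IsCompact (closure Ω) := hΩb.isCompact_closure
  obtain ⟨t, htsub, htcov⟩ := hK.elim_nhds_subcover (fun z => ball z (ε z))
    (fun z hz => ball_mem_nhds z (hε z hz))
  have htne : t.Nonempty := by
    obtain ⟨x₀, hx₀⟩ := hΩne
    have := htcov (subset_closure hx₀)
    obtain ⟨z, hz, -⟩ := Set.mem_iUnion₂.mp this
    exact ⟨z, hz⟩
  set r := t.inf' htne ε with hr
  have hr0 : 0 < r := by
    rw [hr, Finset.lt_inf'_iff]
    exact fun z hz => hε z (htsub z hz)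
  set εmax := t.sup' htne ε with hεmax
  set β := c₀ * (4 * εmax) with hβ
  have hεmax0 : 0 < εmax := by
    obtain ⟨z, hz⟩ := htne
    exact lt_of_lt_of_le (hε z (htsub z hz)) (Finset.le_sup' ε hz)
  have hβ0 : 0 < β := by
    rw [hβ]; positivity
  -- one hop inside a ball of the cover
  have hop : ∀ z ∈ t, ∀ a b : EuclideanSpace ℝ (Fin (m + 1)), a ∈ Ω → b ∈ Ω →
      dist a z < 2 * ε z → dist b z < 2 * ε z →
      SegChain (connectedComponentIn Ω a) a b β := by
    intro z hzt a b ha hb h1 h2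
    have hzc : z ∈ closure Ω := htsub z hzt
    apply (hQ z hzc a b ha hb h1 h2).of_le
    have hd : dist a b < 4 * ε z := by
      have := dist_triangle_right a b z
      linarith
    have hle : ε z ≤ εmax := Finset.le_sup' ε hzt
    rw [hβ]
    nlinarith [dist_nonneg (x := a) (y := b)]
  -- the graph of cover balls
  let G : SimpleGraph ↥t := SimpleGraph.fromRel
    (fun i j => (ball (i:EuclideanSpace ℝ (Fin (m+1))) (ε i) ∩
      ball (j:EuclideanSpace ℝ (Fin (m+1))) (ε j) ∩ Ω).Nonempty)
  have hadj : ∀ i j : ↥t, G.Adj i j → ∃ w, w ∈ Ω ∧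
      dist w (i:EuclideanSpace ℝ (Fin (m+1))) < ε i ∧
      dist w (j:EuclideanSpace ℝ (Fin (m+1))) < ε j := by
    intro i j hij
    obtain ⟨-, h | h⟩ := hij
    · obtain ⟨w, ⟨hwi, hwj⟩, hwΩ⟩ := h
      exact ⟨w, hwΩ, mem_ball.mp hwi, mem_ball.mp hwj⟩
    · obtain ⟨w, ⟨hwj, hwi⟩, hwΩ⟩ := h
      exact ⟨w, hwΩ, mem_ball.mp hwi, mem_ball.mp hwj⟩
  -- walks give chains
  have hwalk : ∀ (i k : ↥t) (w : G.Walk i k) (a : EuclideanSpace ℝ (Fin (m+1))),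
      a ∈ Ω → dist a (i:EuclideanSpace ℝ (Fin (m+1))) < ε i →
      ∀ b ∈ Ω, dist b (k:EuclideanSpace ℝ (Fin (m+1))) < ε k →
      SegChain (connectedComponentIn Ω a) a b ((w.length + 1 : ℕ) * β) := by
    intro i k w
    induction w with
    | @nil u =>
      intro a ha hai b hb hbk
      have hεu : 0 < ε (u:EuclideanSpace ℝ (Fin (m+1))) := hε _ (htsub _ u.2)
      have := hop u u.2 a b ha hb (by linarith) (by linarith)
      apply this.of_le
      simp
    | @cons u v k h p ih =>
      intro a ha hau b hb hbk
      obtain ⟨w₀, hw₀Ω, hw₀u, hw₀v⟩ := hadj u v h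
      have hεu : 0 < ε u := hε _ (htsub _ u.2)
      have c1 : SegChain (connectedComponentIn Ω a) a w₀ β :=
        hop u u.2 a w₀ ha hw₀Ω (by linarith) (by linarith)
      have c2 : SegChain (connectedComponentIn Ω w₀) w₀ b ((p.length + 1 : ℕ) * β) :=
        ih w₀ hw₀Ω hw₀v b hb hbk
      have hw₀c : w₀ ∈ connectedComponentIn Ω a := c1.mem_right
      rw [← connectedComponentIn_eq hw₀c] at c2
      apply (c1.trans c2).of_le
      rw [SimpleGraph.Walk.length_cons]
      push_cast
      ring_nf
      linarith
  -- reachability covers the connected component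
  have hreach : ∀ (x : EuclideanSpace ℝ (Fin (m+1))), x ∈ Ω → ∀ i : ↥t,
      dist x (i:EuclideanSpace ℝ (Fin (m+1))) < ε i →
      ∀ y ∈ connectedComponentIn Ω x, ∃ k : ↥t, G.Reachable i k ∧
        dist y (k:EuclideanSpace ℝ (Fin (m+1))) < ε k := by
    intro x hx i hxi y hy
    by_contra hcon
    push_neg at hcon
    set C := connectedComponentIn Ω x with hC
    set W : Set (EuclideanSpace ℝ (Fin (m+1))) :=
      ⋃ (j : ↥t) (_ : G.Reachable i j), ball (j:EuclideanSpace ℝ (Fin (m+1))) (ε j) with hW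
    set W' : Set (EuclideanSpace ℝ (Fin (m+1))) :=
      ⋃ (j : ↥t) (_ : ¬ G.Reachable i j), ball (j:EuclideanSpace ℝ (Fin (m+1))) (ε j) with hW'
    have hWopen : IsOpen W := isOpen_iUnion fun j => isOpen_iUnion fun _ => isOpen_ball
    have hW'open : IsOpen W' := isOpen_iUnion fun j => isOpen_iUnion fun _ => isOpen_ball
    have hcover : ∀ c ∈ C, c ∈ W ∪ W' := by
      intro c hc
      have hcK : c ∈ closure Ω := subset_closure (connectedComponentIn_subset _ _ hc)
      obtain ⟨z, hzt, hz⟩ := Set.mem_iUnion₂.mp (htcov hcK)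
      by_cases hR : G.Reachable i ⟨z, hzt⟩
      · exact Or.inl (Set.mem_iUnion₂.mpr ⟨⟨z, hzt⟩, hR, hz⟩)
      · exact Or.inr (Set.mem_iUnion₂.mpr ⟨⟨z, hzt⟩, hR, hz⟩)
    have hpre : IsPreconnected C := isPreconnected_connectedComponentIn
    have hxW : x ∈ W := Set.mem_iUnion₂.mpr ⟨i, SimpleGraph.Reachable.refl i, mem_ball.mpr hxi⟩
    have hyW' : y ∈ W' := by
      have hyK : y ∈ closure Ω := subset_closure (connectedComponentIn_subset _ _ hy)
      obtain ⟨z, hzt, hz⟩ := Set.mem_iUnion₂.mp (htcov hyK)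
      refine Set.mem_iUnion₂.mpr ⟨⟨z, hzt⟩, ?_, hz⟩
      intro hR
      exact absurd (mem_ball.mp hz) (hcon ⟨z, hzt⟩ hR).not_gt
    obtain ⟨c, hcC, hcW, hcW'⟩ :=
      hpre W W' hWopen hW'open (fun c hc => hcover c hc)
        ⟨x, mem_connectedComponentIn hx, hxW⟩ ⟨y, hy, hyW'⟩
    obtain ⟨j, hRj, hcj⟩ := Set.mem_iUnion₂.mp hcW
    obtain ⟨j', hRj', hcj'⟩ := Set.mem_iUnion₂.mp hcW'
    have hcΩ : c ∈ Ω := connectedComponentIn_subset _ _ hcC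
    have hne : j ≠ j' := by
      intro hjj
      exact hRj' (hjj ▸ hRj)
    have hAdj : G.Adj j j' := by
      refine ⟨hne, Or.inl ⟨c, ⟨hcj, hcj'⟩, hcΩ⟩⟩
    exact hRj' (hRj.trans hAdj.reachable)
  -- the far bound
  set B := (Fintype.card ↥t : ℝ) * β with hB
  have hcard : 0 < Fintype.card ↥t := by
    obtain ⟨z, hz⟩ := htne
    exact Fintype.card_pos_iff.mpr ⟨⟨z, hz⟩⟩
  have hB0 : 0 < B := by
    rw [hB]
    have : (0:ℝ) < (Fintype.card ↥t : ℝ) := by exact_mod_cast hcard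
    positivity
  have hfar : ∀ x ∈ Ω, ∀ y ∈ connectedComponentIn Ω x,
      SegChain (connectedComponentIn Ω x) x y B := by
    intro x hx y hy
    have hxK : x ∈ closure Ω := subset_closure hx
    obtain ⟨z, hzt, hz⟩ := Set.mem_iUnion₂.mp (htcov hxK)
    obtain ⟨k, hRk, hyk⟩ := hreach x hx ⟨z, hzt⟩ (mem_ball.mp hz) y hy
    obtain ⟨p⟩ := hRk
    have hyΩ : y ∈ Ω := connectedComponentIn_subset _ _ hy
    have hpath := p.toPath
    have hchain := hwalk ⟨z, hzt⟩ k (hpath : G.Walk ⟨z, hzt⟩ k) x hx (mem_ball.mp hz) y hyΩ hyk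
    apply hchain.of_le
    rw [hB]
    have hlen : ((hpath : G.Walk ⟨z, hzt⟩ k).length + 1 : ℕ) ≤ Fintype.card ↥t :=
      hpath.2.length_lt
    have : (((hpath : G.Walk ⟨z, hzt⟩ k).length + 1 : ℕ) : ℝ) ≤ (Fintype.card ↥t : ℝ) := by
      exact_mod_cast hlen
    nlinarith
  -- the near bound
  have hnear : ∀ x ∈ Ω, ∀ y ∈ connectedComponentIn Ω x, dist x y < r →
      SegChain (connectedComponentIn Ω x) x y (c₀ * dist x y) := by
    intro x hx y hy hxy
    have hxK : x ∈ closure Ω := subset_closure hx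
    obtain ⟨z, hzt, hz⟩ := Set.mem_iUnion₂.mp (htcov hxK)
    have hyΩ : y ∈ Ω := connectedComponentIn_subset _ _ hy
    have hrz : r ≤ ε z := Finset.inf'_le ε hzt
    have hxz : dist x z < ε z := mem_ball.mp hz
    have hyz : dist y z < 2 * ε z := by
      have := dist_triangle y x z
      have := dist_comm x y
      linarith [dist_comm x y ▸ hxy]
    exact hQ z (htsub z hzt) x y hx hyΩ (by linarith) hyz
  -- conclusion
  refine ⟨max c₀ (B / r), lt_of_lt_of_le hc₀0 (le_max_left _ _), ?_⟩
  intro x y hx hy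
  have key : SegChain (connectedComponentIn Ω x) x y (max c₀ (B / r) * dist x y) := by
    by_cases hxy : dist x y < r
    · apply (hnear x hx y hy hxy).of_le
      have := dist_nonneg (x := x) (y := y)
      nlinarith [le_max_left c₀ (B / r)]
    · push_neg at hxy
      apply (hfar x hx y hy).of_le
      have h1 : B / r * r = B := div_mul_cancel₀ B hr0.ne'
      have h2 : B / r ≤ max c₀ (B / r) := le_max_right _ _
      have h3 : 0 ≤ B / r := le_of_lt (div_pos hB0 hr0)
      nlinarith [dist_nonneg (x := x) (y := y)]
  obtain ⟨M, p, h0, h1, hseg, hsum⟩ := key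
  have hmem : (∑ j ∈ Finset.range (M + 1), ‖p j - p (j + 1)‖) ∈
      {ℓ : ℝ | ∃ (M : ℕ) (p : ℕ → EuclideanSpace ℝ (Fin (m + 1))),
        p 0 = x ∧ p (M + 1) = y ∧
        (∀ j ≤ M, ∀ t ∈ Set.Icc (0 : ℝ) 1,
          (1 - t) • p j + t • p (j + 1) ∈ connectedComponentIn Ω x) ∧
        ℓ = ∑ j ∈ Finset.range (M + 1), ‖p j - p (j + 1)‖} :=
    ⟨M, p, h0, h1, hseg, rfl⟩
  have hbdd : BddBelow {ℓ : ℝ | ∃ (M : ℕ) (p : ℕ → EuclideanSpace ℝ (Fin (m + 1))),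
        p 0 = x ∧ p (M + 1) = y ∧
        (∀ j ≤ M, ∀ t ∈ Set.Icc (0 : ℝ) 1,
          (1 - t) • p j + t • p (j + 1) ∈ connectedComponentIn Ω x) ∧
        ℓ = ∑ j ∈ Finset.range (M + 1), ‖p j - p (j + 1)‖} := by
    refine ⟨0, fun ℓ hℓ => ?_⟩
    obtain ⟨M', p', -, -, -, rfl⟩ := hℓ
    positivity
  calc sInf _ ≤ ∑ j ∈ Finset.range (M + 1), ‖p j - p (j + 1)‖ := csInf_le hbdd hmem
  _ ≤ max c₀ (B / r) * dist x y := hsum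
  _ = max c₀ (B / r) * ‖x - y‖ := by rw [dist_eq_norm]
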